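/- Let p be an odd prime, m ≥ ν ≥ 1, and α, β integers coprime to p. If f(x) = p^{2ν} + pᵐβx + αx² is reducible in ℤ[[x]], then f̂(x) = p² + p^{m−ν+1}βx + αx² is reducible in ℤ[[x]]. -/

import Mathlib

open PowerSeries

private lemma coeff_two_mul' (φ ψ : PowerSeries ℤ) :
    (coeff 2) (φ*ψ) = constantCoeff φ * coeff 2 ψ + coeff 1 φ * coeff 1 ψ
      + coeff 2 φ * constantCoeff ψ := by
  rw [PowerSeries.coeff_mul]
  rw [show (Finset.HasAntidiagonal.antidiagonal 2 : Finset (ℕ×ℕ)) = {(0,2),(1,1),(2,0)} from rfl]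
  rw [Finset.sum_insert (by decide), Finset.sum_insert (by decide), Finset.sum_singleton]
  simp [coeff_zero_eq_constantCoeff]
  ring

private lemma rescale_quad (cc r s t : ℤ) :
    rescale cc (C r + C s * X + C t * X^2)
      = C r + C (s*cc) * X + C (t*cc^2) * X^2 := by
  ext n
  simp only [coeff_rescale, map_add, coeff_C, coeff_C_mul, coeff_X, coeff_X_pow]
  rcases n with _ | _ | _ | n <;> simp <;> ring

private lemma rescale_C' (c x : ℤ) : rescale c (C x) = C x := by
  ext n
  simp only [coeff_rescale, coeff_C]
  split_ifs with h
  · subst h; simp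
  · simp

theorem stmt_10 (p : ℕ) (hp : p.Prime) (hodd : Odd p) (ν m : ℕ)
    (hν : 1 ≤ ν) (hm : ν ≤ m) (α β : ℤ)
    (hα : Int.gcd (p : ℤ) α = 1) (hβ : Int.gcd (p : ℤ) β = 1)
    (h : ∃ a b : PowerSeries ℤ, ¬ IsUnit a ∧ ¬ IsUnit b ∧
      (PowerSeries.C : ℤ →+* PowerSeries ℤ) ((p : ℤ) ^ (2 * ν)) +
        (PowerSeries.C : ℤ →+* PowerSeries ℤ) ((p : ℤ) ^ m * β) * PowerSeries.X +
        (PowerSeries.C : ℤ →+* PowerSeries ℤ) α * PowerSeries.X ^ 2 = a * b) :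
    ∃ a b : PowerSeries ℤ, ¬ IsUnit a ∧ ¬ IsUnit b ∧
      (PowerSeries.C : ℤ →+* PowerSeries ℤ) ((p : ℤ) ^ 2) +
        (PowerSeries.C : ℤ →+* PowerSeries ℤ) ((p : ℤ) ^ (m - ν + 1) * β) * PowerSeries.X +
        (PowerSeries.C : ℤ →+* PowerSeries ℤ) α * PowerSeries.X ^ 2 = a * b := by
  obtain ⟨a, b, ha, hb, hfab⟩ := h
  have hp2 : 2 ≤ p := hp.two_le
  have hpz : (p:ℤ) ≠ 0 := by positivity
  have hpα : ¬ (p:ℤ) ∣ α := by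
    intro hd
    have h1 : (p:ℤ) ∣ (Int.gcd (p:ℤ) α : ℤ) := by have := Int.dvd_gcd (dvd_rfl : (p:ℤ) ∣ p) hd; exact_mod_cast this
    rw [hα] at h1
    have := Int.le_of_dvd one_pos h1
    omega
  have h0 : constantCoeff a * constantCoeff b = (p:ℤ)^(2*ν) := by
    have := congrArg (constantCoeff) hfab
    simpa using this.symm
  have h1 : coeff 1 a * constantCoeff b + coeff 1 b * constantCoeff a
      = (p:ℤ)^m * β := by
    have := congrArg (coeff 1) hfab
    rw [coeff_one_mul, map_add, map_add, coeff_C, coeff_C_mul, coeff_one_X, coeff_C_mul,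
      coeff_X_pow] at this
    simpa using this.symm
  have h2 : constantCoeff a * coeff 2 b + coeff 1 a * coeff 1 b
      + coeff 2 a * constantCoeff b = α := by
    have := congrArg (coeff 2) hfab
    rw [coeff_two_mul', map_add, map_add, coeff_C, coeff_C_mul, coeff_X, coeff_C_mul,
      coeff_X_pow] at this
    simpa using this.symm
  obtain ⟨i, hi2, hia⟩ := (Nat.dvd_prime_pow hp).mp (show (constantCoeff a).natAbs ∣ p^(2*ν) by
    have hdvd : (constantCoeff a) ∣ (p:ℤ)^(2*ν) := ⟨_, h0.symm⟩
    have := Int.natAbs_dvd_natAbs.mpr hdvd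
    simpa [Int.natAbs_pow] using this)
  obtain ⟨j, hj2, hjb⟩ := (Nat.dvd_prime_pow hp).mp (show (constantCoeff b).natAbs ∣ p^(2*ν) by
    have hdvd : (constantCoeff b) ∣ (p:ℤ)^(2*ν) := ⟨constantCoeff a, by rw [← h0]; ring⟩
    have := Int.natAbs_dvd_natAbs.mpr hdvd
    simpa [Int.natAbs_pow] using this)
  have hij : i + j = 2*ν := by
    have h' : p^i * p^j = p^(2*ν) := by
      have := congrArg Int.natAbs h0
      rw [Int.natAbs_mul, hia, hjb] at this
      simpa [Int.natAbs_pow] using this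
    rw [← pow_add] at h'
    exact Nat.pow_right_injective hp2 h'
  have hi1 : 1 ≤ i := by
    rcases Nat.eq_zero_or_pos i with rfl | h'
    · exact absurd (isUnit_iff_constantCoeff.mpr
        (Int.isUnit_iff_natAbs_eq.mpr (by simpa using hia))) ha
    · exact h'
  have hj1 : 1 ≤ j := by
    rcases Nat.eq_zero_or_pos j with rfl | h'
    · exact absurd (isUnit_iff_constantCoeff.mpr
        (Int.isUnit_iff_natAbs_eq.mpr (by simpa using hjb))) hb
    · exact h'
  have hpa0 : (p:ℤ) ∣ constantCoeff a := by
    rw [← Int.dvd_natAbs, hia]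
    push_cast
    exact dvd_pow_self _ (by omega)
  have hpb0 : (p:ℤ) ∣ constantCoeff b := by
    rw [← Int.dvd_natAbs, hjb]
    push_cast
    exact dvd_pow_self _ (by omega)
  have hpa1 : ¬ (p:ℤ) ∣ coeff 1 a := by
    intro hd
    apply hpα
    rw [← h2]
    exact dvd_add (dvd_add (hpa0.mul_right _) (hd.mul_right _)) (hpb0.mul_left _)
  have hpb1 : ¬ (p:ℤ) ∣ coeff 1 b := by
    intro hd
    apply hpα
    rw [← h2]
    exact dvd_add (dvd_add (hpa0.mul_right _) (hd.mul_left _)) (hpb0.mul_left _)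
  have hiν : i = ν := by
    by_contra hne
    rcases Nat.lt_or_ge i ν with hlt | hge
    · apply hpb1
      have hd1 : (p:ℤ)^(i+1) ∣ coeff 1 a * constantCoeff b := by
        apply Dvd.dvd.mul_left
        rw [← Int.dvd_natAbs, hjb]
        push_cast
        exact pow_dvd_pow _ (by omega)
      have hd2 : (p:ℤ)^(i+1) ∣ (p:ℤ)^m * β :=
        Dvd.dvd.mul_right (pow_dvd_pow _ (by omega)) _
      have hd3 : (p:ℤ)^(i+1) ∣ coeff 1 b * constantCoeff a := by
        have := dvd_sub hd2 hd1
        rw [← h1] at this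
        simpa using this
      have hd4 : p^(i+1) ∣ (coeff 1 b).natAbs * p^i := by
        have := Int.natAbs_dvd_natAbs.mpr hd3
        rwa [Int.natAbs_mul, hia, Int.natAbs_pow, Int.natAbs_natCast] at this
      have hd5 : p ∣ (coeff 1 b).natAbs := by
        have hpi : (0:ℕ) < p^i := Nat.pow_pos (by omega)
        have h6 : p^i * p ∣ p^i * (coeff 1 b).natAbs := by
          rw [← pow_succ, mul_comm (p^i) _]
          exact hd4
        exact (mul_dvd_mul_iff_left hpi.ne').mp h6
      have : (p:ℤ).natAbs ∣ (coeff 1 b).natAbs := by simpa using hd5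
      exact Int.natAbs_dvd_natAbs.mp this
    · have hjlt : j < ν := by omega
      apply hpa1
      have hd1 : (p:ℤ)^(j+1) ∣ coeff 1 b * constantCoeff a := by
        apply Dvd.dvd.mul_left
        rw [← Int.dvd_natAbs, hia]
        push_cast
        exact pow_dvd_pow _ (by omega)
      have hd2 : (p:ℤ)^(j+1) ∣ (p:ℤ)^m * β :=
        Dvd.dvd.mul_right (pow_dvd_pow _ (by omega)) _
      have hd3 : (p:ℤ)^(j+1) ∣ coeff 1 a * constantCoeff b := by
        have := dvd_sub hd2 hd1
        rw [← h1] at this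
        simpa using this
      have hd4 : p^(j+1) ∣ (coeff 1 a).natAbs * p^j := by
        have := Int.natAbs_dvd_natAbs.mpr hd3
        rwa [Int.natAbs_mul, hjb, Int.natAbs_pow, Int.natAbs_natCast] at this
      have hd5 : p ∣ (coeff 1 a).natAbs := by
        have hpi : (0:ℕ) < p^j := Nat.pow_pos (by omega)
        have h6 : p^j * p ∣ p^j * (coeff 1 a).natAbs := by
          rw [← pow_succ, mul_comm (p^j) _]
          exact hd4
        exact (mul_dvd_mul_iff_left hpi.ne').mp h6
      have : (p:ℤ).natAbs ∣ (coeff 1 a).natAbs := by simpa using hd5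
      exact Int.natAbs_dvd_natAbs.mp this
  have hjν : j = ν := by omega
  -- extract the constant terms as ±p^ν and construct the divided factors
  set c : ℤ := (p:ℤ)^(ν-1) with hc
  have hcp : c * (p:ℤ) = (p:ℤ)^ν := by
    rw [hc, ← pow_succ, Nat.sub_add_cancel hν]
  obtain ⟨ca, hca, hpca⟩ : ∃ ca, constantCoeff a = c * ca ∧ (p:ℤ) ∣ ca := by
    rcases Int.natAbs_eq (constantCoeff a) with h' | h'
    · exact ⟨(p:ℤ), by rw [h', hia, hiν, hcp]; push_cast; ring, dvd_rfl⟩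
    · exact ⟨-(p:ℤ), by rw [h', hia, hiν, mul_neg, hcp]; push_cast; ring,
        Dvd.dvd.neg_right dvd_rfl⟩
  obtain ⟨cb, hcb, hpcb⟩ : ∃ cb, constantCoeff b = c * cb ∧ (p:ℤ) ∣ cb := by
    rcases Int.natAbs_eq (constantCoeff b) with h' | h'
    · exact ⟨(p:ℤ), by rw [h', hjb, hjν, hcp]; push_cast; ring, dvd_rfl⟩
    · exact ⟨-(p:ℤ), by rw [h', hjb, hjν, mul_neg, hcp]; push_cast; ring,
        Dvd.dvd.neg_right dvd_rfl⟩
  set A : PowerSeries ℤ := PowerSeries.mk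
    (fun k => if k = 0 then ca else coeff k a * c^(k-1)) with hA
  set B : PowerSeries ℤ := PowerSeries.mk
    (fun k => if k = 0 then cb else coeff k b * c^(k-1)) with hB
  have hra : rescale c a = C c * A := by
    ext n
    rw [coeff_rescale, coeff_C_mul, hA, coeff_mk]
    cases n with
    | zero => simpa [coeff_zero_eq_constantCoeff] using hca
    | succ k =>
        rw [if_neg (Nat.succ_ne_zero k), Nat.succ_sub_one, pow_succ']
        ring
  have hrb : rescale c b = C c * B := by
    ext n
    rw [coeff_rescale, coeff_C_mul, hB, coeff_mk]
    cases n with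
    | zero => simpa [coeff_zero_eq_constantCoeff] using hcb
    | succ k =>
        rw [if_neg (Nat.succ_ne_zero k), Nat.succ_sub_one, pow_succ']
        ring
  -- scalar identities
  have e1 : c^2 * (p:ℤ)^2 = (p:ℤ)^(2*ν) := by
    rw [hc, ← pow_mul, ← pow_add]
    congr 1
    omega
  have e2 : (p:ℤ)^m * β * c = c^2 * ((p:ℤ)^(m-ν+1) * β) := by
    rw [hc, ← pow_mul]
    have hee : m + (ν-1) = (ν-1)*2 + (m-ν+1) := by omega
    calc (p:ℤ)^m * β * (p:ℤ)^(ν-1) = (p:ℤ)^(m + (ν-1)) * β := by rw [pow_add]; ring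
    _ = (p:ℤ)^((ν-1)*2 + (m-ν+1)) * β := by rw [hee]
    _ = (p:ℤ)^((ν-1)*2) * ((p:ℤ)^(m-ν+1) * β) := by rw [pow_add]; ring
  -- rescaling the original series
  have s1' : C (c^2) * ((C) ((p:ℤ)^2) + (C) ((p:ℤ)^(m-ν+1)*β) * X + (C) α * X^2)
      = C (c^2*(p:ℤ)^2) + C (c^2*((p:ℤ)^(m-ν+1)*β)) * X + C (c^2*α) * X^2 := by
    simp only [map_mul]
    ring
  have s1 : rescale c ((C) ((p:ℤ)^(2*ν)) + (C) ((p:ℤ)^m*β) * X + (C) α * X^2)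
      = C (c^2) * ((C) ((p:ℤ)^2) + (C) ((p:ℤ)^(m-ν+1)*β) * X + (C) α * X^2) := by
    rw [rescale_quad, s1', e1, ← e2, mul_comm (c^2) α]
  have s2 : C (c^2) * ((C) ((p:ℤ)^2) + (C) ((p:ℤ)^(m-ν+1)*β) * X + (C) α * X^2)
      = C (c^2) * (A * B) := by
    rw [← s1, hfab, map_mul, hra, hrb]
    rw [mul_mul_mul_comm, ← map_mul, ← pow_two]
  have hC2 : (C (c^2)) ≠ 0 := by
    intro hh
    have h3 := congrArg (constantCoeff) hh
    simp only [constantCoeff_C, map_zero] at h3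
    exact pow_ne_zero 2 (pow_ne_zero _ hpz) h3
  refine ⟨A, B, ?_, ?_, mul_left_cancel₀ hC2 s2⟩
  · intro hu
    have h4 : IsUnit ca := by
      have := isUnit_iff_constantCoeff.mp hu
      rwa [hA, ← coeff_zero_eq_constantCoeff, coeff_mk, if_pos rfl] at this
    have h5 : IsUnit (p:ℤ) := isUnit_of_dvd_unit hpca h4
    rcases Int.isUnit_iff.mp h5 with h' | h' <;>
      [skip; skip] <;> (have : (2:ℤ) ≤ (p:ℤ) := by exact_mod_cast hp2) <;> omega
  · intro hu
    have h4 : IsUnit cb := by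
      have := isUnit_iff_constantCoeff.mp hu
      rwa [hB, ← coeff_zero_eq_constantCoeff, coeff_mk, if_pos rfl] at this
    have h5 : IsUnit (p:ℤ) := isUnit_of_dvd_unit hpcb h4
    rcases Int.isUnit_iff.mp h5 with h' | h' <;>
      [skip; skip] <;> (have : (2:ℤ) ≤ (p:ℤ) := by exact_mod_cast hp2) <;> omega
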